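/- Let u : ℝ → ℝ be given by u(x) = e^{B} Ψ(x − y(x)) where B ∈ ℝ, y : ℝ → ℝ is nondecreasing with |x − y(x)| ≤ Ct for all x, and Ψ : ℝ → ℝ satisfies |Ψ(z₁) − Ψ(z₂)| ≤ K|z₁ − z₂|^{1/p} for some K > 0, p ≥ 1. Then for any a < b, the p-variation of u on [a,b] satisfies TV^{1/p}(u)[a,b] = sup over subdivisions a = x₀ < ⋯ < x_m = b of Σ |u(x_k) − u(x_{k−1})|^p ≤ e^{pB} K^p (2(b−a) + 2Ct). In particular u ∈ BV^{1/p}([a,b]). -/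

import Mathlib

open scoped BigOperators

theorem stmt11 (B C t K p : ℝ) (hp : 1 ≤ p) (hK : 0 < K) (hC : 0 ≤ C) (ht : 0 ≤ t)
    (y Ψ u : ℝ → ℝ) (hy : Monotone y) (hyb : ∀ x : ℝ, |x - y x| ≤ C * t)
    (hΨ : ∀ z₁ z₂ : ℝ, |Ψ z₁ - Ψ z₂| ≤ K * |z₁ - z₂| ^ (1 / p))
    (hu : ∀ x : ℝ, u x = Real.exp B * Ψ (x - y x)) :
    ∀ a b : ℝ, a < b → ∀ (m : ℕ) (x : Fin (m + 1) → ℝ), StrictMono x →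
      x 0 = a → x (Fin.last m) = b →
      ∑ i : Fin m, |u (x i.succ) - u (x i.castSucc)| ^ p ≤
        Real.exp (p * B) * K ^ p * (2 * (b - a) + 2 * C * t) := by
  intro a b hab m x hx hxa hxb
  have hp0 : (0:ℝ) < p := lt_of_lt_of_le one_pos hp
  have hEK : 0 ≤ Real.exp (p * B) * K ^ p := by positivity
  -- pointwise bound
  have key : ∀ i : Fin m, |u (x i.succ) - u (x i.castSucc)| ^ p ≤
      Real.exp (p * B) * K ^ p *
        ((x i.succ - x i.castSucc) + (y (x i.succ) - y (x i.castSucc))) := by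
    intro i
    set z1 := x i.succ - y (x i.succ) with hz1
    set z2 := x i.castSucc - y (x i.castSucc) with hz2
    have hΔ : |u (x i.succ) - u (x i.castSucc)| ≤
        Real.exp B * (K * |z1 - z2| ^ (1/p)) := by
      rw [hu, hu, ← mul_sub, abs_mul, abs_of_pos (Real.exp_pos B)]
      exact mul_le_mul_of_nonneg_left (hΨ _ _) (Real.exp_pos B).le
    have h1 : |u (x i.succ) - u (x i.castSucc)| ^ p ≤
        (Real.exp B * (K * |z1 - z2| ^ (1/p))) ^ p :=
      Real.rpow_le_rpow (abs_nonneg _) hΔ hp0.le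
    have h2 : (Real.exp B * (K * |z1 - z2| ^ (1/p))) ^ p
        = Real.exp (p * B) * K ^ p * |z1 - z2| := by
      rw [Real.mul_rpow (Real.exp_pos B).le (by positivity),
          Real.mul_rpow hK.le (Real.rpow_nonneg (abs_nonneg _) _),
          ← Real.rpow_mul (abs_nonneg _), one_div_mul_cancel hp0.ne',
          Real.rpow_one, ← Real.exp_mul, mul_comm B p, mul_assoc]
    have hxi : x i.castSucc ≤ x i.succ := (hx (Fin.castSucc_lt_succ : i.castSucc < i.succ)).le
    have hyi : y (x i.castSucc) ≤ y (x i.succ) := hy hxi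
    have h3 : |z1 - z2| ≤ (x i.succ - x i.castSucc) + (y (x i.succ) - y (x i.castSucc)) := by
      rw [hz1, hz2]
      rw [abs_le]
      constructor <;> [skip; skip] <;> nlinarith
    calc |u (x i.succ) - u (x i.castSucc)| ^ p
        ≤ Real.exp (p * B) * K ^ p * |z1 - z2| := h1.trans_eq h2
      _ ≤ _ := mul_le_mul_of_nonneg_left h3 hEK
  -- telescoping sum
  have hsum : ∑ i : Fin m,
      ((x i.succ - x i.castSucc) + (y (x i.succ) - y (x i.castSucc)))
      = (b - a) + (y b - y a) := by
    set g : ℕ → ℝ := fun n => x ⟨min n m, Nat.lt_succ_of_le (min_le_right n m)⟩ with hg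
    have hgc : ∀ i : Fin m, g i = x i.castSucc := by
      intro i
      simp only [hg]
      congr 1
      exact Fin.ext (by simpa using Nat.min_eq_left i.isLt.le)
    have hgs : ∀ i : Fin m, g (i + 1) = x i.succ := by
      intro i
      simp only [hg]
      congr 1
      exact Fin.ext (by simpa using Nat.min_eq_left i.isLt)
    have hgm : g m = b := by
      rw [← hxb]
      simp only [hg]
      congr 1
      exact Fin.ext (by simp)
    have hg0 : g 0 = a := by
      rw [← hxa]
      simp only [hg]
      congr 1
    calc ∑ i : Fin m, ((x i.succ - x i.castSucc) + (y (x i.succ) - y (x i.castSucc)))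
        = ∑ i : Fin m, ((g (i+1) + y (g (i+1))) - (g (i:ℕ) + y (g (i:ℕ)))) := by
          refine Finset.sum_congr rfl fun i _ => ?_
          rw [hgc i, hgs i]; ring
      _ = ∑ n ∈ Finset.range m, ((g (n+1) + y (g (n+1))) - (g n + y (g n))) :=
          Fin.sum_univ_eq_sum_range (fun n => (g (n+1) + y (g (n+1))) - (g n + y (g n))) m
      _ = (g m + y (g m)) - (g 0 + y (g 0)) := Finset.sum_range_sub (fun n => g n + y (g n)) m
      _ = (b - a) + (y b - y a) := by rw [hgm, hg0]; ring
  calc ∑ i : Fin m, |u (x i.succ) - u (x i.castSucc)| ^ p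
      ≤ ∑ i : Fin m, Real.exp (p * B) * K ^ p *
          ((x i.succ - x i.castSucc) + (y (x i.succ) - y (x i.castSucc))) :=
        Finset.sum_le_sum fun i _ => key i
    _ = Real.exp (p * B) * K ^ p * ((b - a) + (y b - y a)) := by
        rw [← Finset.mul_sum, hsum]
    _ ≤ Real.exp (p * B) * K ^ p * (2 * (b - a) + 2 * C * t) := by
        refine mul_le_mul_of_nonneg_left ?_ hEK
        have h1 := abs_le.mp (hyb a)
        have h2 := abs_le.mp (hyb b)
        linarith
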